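/- A measurable set G ⊆ ℝ is a 2-dilation generator of a partition of ℝ (i.e., the sets 2ⁿG, n ∈ ℤ, are disjoint with union conull in ℝ) if and only if, modulo a null set, G is dilation congruent modulo 2 to [−2π,−π) ∪ [π,2π). -/

import Mathlib

open MeasureTheory Set Real
/-- `G` and `H` are dilation congruent modulo `2`: there is a measurable bijection
`τ : G → H` with `τ(s) = 2ⁿ s` (`n ∈ ℤ` depending on `s`) for every `s ∈ G`. -/
def DilationCongruent (G H : Set ℝ) : Prop :=
  ∃ τ : ℝ → ℝ, Measurable τ ∧ Set.BijOn τ G H ∧ ∀ s ∈ G, ∃ n : ℤ, τ s = (2 : ℝ) ^ n * s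


lemma two_zpow_pos (k : ℤ) : (0:ℝ) < 2^k := zpow_pos (by norm_num) k

lemma dil_image_eq (k : ℤ) (A : Set ℝ) :
    (fun s => (2:ℝ)^k * s) '' A = (fun s => (2:ℝ)^(-k) * s) ⁻¹' A := by
  ext x
  simp only [mem_image, mem_preimage]
  constructor
  · rintro ⟨a, ha, rfl⟩
    rwa [← mul_assoc, ← zpow_add₀ (two_ne_zero (α := ℝ)), neg_add_cancel, zpow_zero, one_mul]
  · intro h
    exact ⟨_, h, by rw [← mul_assoc, ← zpow_add₀ (two_ne_zero (α := ℝ)), add_neg_cancel,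
      zpow_zero, one_mul]⟩

lemma dil_meas {A : Set ℝ} (k : ℤ) (hA : MeasurableSet A) :
    MeasurableSet ((fun s => (2:ℝ)^k * s) '' A) := by
  rw [dil_image_eq]; exact hA.preimage (measurable_const_mul _)

lemma dil_null {A : Set ℝ} (k : ℤ) (hA : volume A = 0) :
    volume ((fun s => (2:ℝ)^k * s) '' A) = 0 := by
  rw [dil_image_eq, Real.volume_preimage_mul_left (ne_of_gt (two_zpow_pos _)), hA, mul_zero]

lemma zero_not_mem_D : (0:ℝ) ∉ Set.Ico (-(2 * π)) (-π) ∪ Set.Ico π (2 * π) := by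
  have := pi_pos
  simp only [mem_union, mem_Ico, not_or]
  constructor <;> intro h <;> linarith [h.1, h.2]

lemma dil_uniq {s : ℝ} (hs : s ≠ 0) {m n : ℤ}
    (hm : (2:ℝ)^m * s ∈ Set.Ico (-(2 * π)) (-π) ∪ Set.Ico π (2 * π))
    (hn : (2:ℝ)^n * s ∈ Set.Ico (-(2 * π)) (-π) ∪ Set.Ico π (2 * π)) : m = n := by
  have hπ := pi_pos
  rcases hs.lt_or_gt with h | h
  · -- s < 0 : both in the negative component
    have hm' : -(2*π) ≤ (2:ℝ)^m * s ∧ (2:ℝ)^m * s < -π := by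
      rcases hm with h1 | h1
      · exact ⟨h1.1, h1.2⟩
      · exfalso; nlinarith [two_zpow_pos m, h1.1]
    have hn' : -(2*π) ≤ (2:ℝ)^n * s ∧ (2:ℝ)^n * s < -π := by
      rcases hn with h1 | h1
      · exact ⟨h1.1, h1.2⟩
      · exfalso; nlinarith [two_zpow_pos n, h1.1]
    have key : ∀ a b : ℤ, -(2*π) ≤ (2:ℝ)^a * s → (2:ℝ)^b * s < -π → a ≤ b := by
      intro a b ha hb
      have h1 : (2:ℝ)^(b+1) * s < (2:ℝ)^a * s := by
        rw [zpow_add_one₀ (two_ne_zero (α := ℝ))]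
        nlinarith
      have h2 : (2:ℝ)^a * (-s) < (2:ℝ)^(b+1) * (-s) := by
        simp only [mul_neg]; linarith
      have h3 : (2:ℝ)^a < (2:ℝ)^(b+1) :=
        lt_of_mul_lt_mul_right h2 (by linarith)
      have := (zpow_lt_zpow_iff_right₀ (one_lt_two (α := ℝ))).mp h3
      omega
    exact le_antisymm (key m n hm'.1 hn'.2) (key n m hn'.1 hm'.2)
  · -- 0 < s : both in the positive component
    have hm' : π ≤ (2:ℝ)^m * s ∧ (2:ℝ)^m * s < 2*π := by
      rcases hm with h1 | h1
      · exfalso; nlinarith [two_zpow_pos m, h1.2]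
      · exact ⟨h1.1, h1.2⟩
    have hn' : π ≤ (2:ℝ)^n * s ∧ (2:ℝ)^n * s < 2*π := by
      rcases hn with h1 | h1
      · exfalso; nlinarith [two_zpow_pos n, h1.2]
      · exact ⟨h1.1, h1.2⟩
    have key : ∀ a b : ℤ, π ≤ (2:ℝ)^a * s → (2:ℝ)^b * s < 2*π → b ≤ a := by
      intro a b ha hb
      have h1 : (2:ℝ)^b * s < (2:ℝ)^(a+1) * s := by
        rw [zpow_add_one₀ (two_ne_zero (α := ℝ))]
        nlinarith
      have h3 : (2:ℝ)^b < (2:ℝ)^(a+1) := lt_of_mul_lt_mul_right (by linarith) (le_of_lt h)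
      have := (zpow_lt_zpow_iff_right₀ (one_lt_two (α := ℝ))).mp h3
      omega
    exact le_antisymm (key n m hn'.1 hm'.2) (key m n hm'.1 hn'.2)

noncomputable def phiE (s : ℝ) : ℤ :=
  if s < 0 then -⌈Real.logb 2 (-s/(2*π))⌉ else -⌊Real.logb 2 (s/π)⌋

noncomputable def phi (s : ℝ) : ℝ := (2:ℝ)^(phiE s) * s

lemma phiE_meas : Measurable phiE := by
  unfold phiE
  apply Measurable.ite measurableSet_Iio
  · refine Measurable.neg (Measurable.ceil ?_)
    simp only [Real.logb]
    exact (Real.measurable_log.comp (measurable_neg.div_const _)).div_const _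
  · refine Measurable.neg (Measurable.floor ?_)
    simp only [Real.logb]
    exact (Real.measurable_log.comp (measurable_id.div_const _)).div_const _

lemma phi_meas : Measurable phi :=
  ((measurable_from_top.comp phiE_meas).mul measurable_id)

lemma phi_pow (s : ℝ) : ∃ n : ℤ, phi s = (2:ℝ)^n * s := ⟨phiE s, rfl⟩

lemma phi_mem {s : ℝ} (hs : s ≠ 0) :
    phi s ∈ Set.Ico (-(2 * π)) (-π) ∪ Set.Ico π (2 * π) := by
  have hπ := pi_pos
  rcases hs.lt_or_gt with h | h
  · -- s < 0
    left
    have hq : (0:ℝ) < -s/(2*π) := div_pos (by linarith) (by positivity)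
    set y := Real.logb 2 (-s/(2*π)) with hy
    have h2 : (2:ℝ)^y = -s/(2*π) := Real.rpow_logb two_pos (by norm_num) hq
    have hns : -s = (2:ℝ)^y * (2*π) := by
      field_simp at h2; linarith
    have he : phiE s = -⌈y⌉ := by simp [phiE, h, hy]
    have hcast : ((2:ℝ)^((-⌈y⌉ : ℤ)) : ℝ) = (2:ℝ)^((-⌈y⌉ : ℤ) : ℝ) :=
      (Real.rpow_intCast 2 _).symm
    have hphin : -(phi s) = (2:ℝ)^(((-⌈y⌉ : ℤ) : ℝ) + y) * (2*π) := by
      rw [Real.rpow_add two_pos]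
      calc -(phi s) = (2:ℝ)^((-⌈y⌉ : ℤ)) * (-s) := by
            rw [phi, he]; ring
        _ = (2:ℝ)^(((-⌈y⌉ : ℤ) : ℝ)) * ((2:ℝ)^y * (2*π)) := by rw [hcast, hns]
        _ = (2:ℝ)^(((-⌈y⌉ : ℤ) : ℝ)) * (2:ℝ)^y * (2*π) := by ring
    set e : ℝ := ((-⌈y⌉ : ℤ) : ℝ) + y with hedef
    have he1 : e ≤ 0 := by
      rw [hedef]; push_cast; linarith [Int.le_ceil y]
    have he2 : -1 < e := by
      rw [hedef]; push_cast; linarith [Int.ceil_lt_add_one y]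
    have hb1 : (2:ℝ)^e ≤ 1 := by
      calc (2:ℝ)^e ≤ (2:ℝ)^(0:ℝ) :=
            (Real.rpow_le_rpow_left_iff one_lt_two).mpr he1
        _ = 1 := Real.rpow_zero 2
    have hb2 : (1:ℝ)/2 < (2:ℝ)^e := by
      have : (2:ℝ)^(-1:ℝ) < (2:ℝ)^e :=
        (Real.rpow_lt_rpow_left_iff one_lt_two).mpr he2
      rwa [Real.rpow_neg_one, inv_eq_one_div] at this
    have hpp : (0:ℝ) < (2:ℝ)^e := Real.rpow_pos_of_pos two_pos e
    constructor <;> nlinarith [hphin]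
  · -- 0 < s
    right
    have hq : (0:ℝ) < s/π := by positivity
    set y := Real.logb 2 (s/π) with hy
    have h2 : (2:ℝ)^y = s/π := Real.rpow_logb two_pos (by norm_num) hq
    have hns : s = (2:ℝ)^y * π := by
      field_simp at h2; linarith
    have he : phiE s = -⌊y⌋ := by simp [phiE, not_lt.mpr (le_of_lt h), hy]
    have hcast : ((2:ℝ)^((-⌊y⌋ : ℤ)) : ℝ) = (2:ℝ)^((-⌊y⌋ : ℤ) : ℝ) :=
      (Real.rpow_intCast 2 _).symm
    have hphin : phi s = (2:ℝ)^(((-⌊y⌋ : ℤ) : ℝ) + y) * π := by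
      rw [Real.rpow_add two_pos]
      calc phi s = (2:ℝ)^((-⌊y⌋ : ℤ)) * s := by rw [phi, he]
        _ = (2:ℝ)^(((-⌊y⌋ : ℤ) : ℝ)) * ((2:ℝ)^y * π) := by rw [hcast, hns]
        _ = (2:ℝ)^(((-⌊y⌋ : ℤ) : ℝ)) * (2:ℝ)^y * π := by ring
    set e : ℝ := ((-⌊y⌋ : ℤ) : ℝ) + y with hedef
    have he1 : 0 ≤ e := by
      rw [hedef]; push_cast; linarith [Int.floor_le y]
    have he2 : e < 1 := by
      rw [hedef]; push_cast; linarith [Int.lt_floor_add_one y]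
    have hb1 : (1:ℝ) ≤ (2:ℝ)^e := by
      calc (1:ℝ) = (2:ℝ)^(0:ℝ) := (Real.rpow_zero 2).symm
        _ ≤ (2:ℝ)^e := (Real.rpow_le_rpow_left_iff one_lt_two).mpr he1
    have hb2 : (2:ℝ)^e < 2 := by
      have : (2:ℝ)^e < (2:ℝ)^(1:ℝ) :=
        (Real.rpow_lt_rpow_left_iff one_lt_two).mpr he2
      rwa [Real.rpow_one] at this
    constructor <;> nlinarith [hphin]

lemma phi_fix {d : ℝ} (hd : d ∈ Set.Ico (-(2 * π)) (-π) ∪ Set.Ico π (2 * π)) : phi d = d := by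
  have hd0 : d ≠ 0 := fun h => zero_not_mem_D (h ▸ hd)
  have h1 : (2:ℝ)^(phiE d) * d ∈ Set.Ico (-(2 * π)) (-π) ∪ Set.Ico π (2 * π) := phi_mem hd0
  have h2 : (2:ℝ)^(0:ℤ) * d ∈ Set.Ico (-(2 * π)) (-π) ∪ Set.Ico π (2 * π) := by
    rwa [zpow_zero, one_mul]
  have := dil_uniq hd0 h1 h2
  rw [phi, this, zpow_zero, one_mul]

lemma phi_dil {s : ℝ} (hs : s ≠ 0) (k : ℤ) : phi ((2:ℝ)^k * s) = phi s := by
  have hks : (2:ℝ)^k * s ≠ 0 := mul_ne_zero (ne_of_gt (two_zpow_pos k)) hs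
  have h1 : (2:ℝ)^(phiE ((2:ℝ)^k * s) + k) * s
      ∈ Set.Ico (-(2 * π)) (-π) ∪ Set.Ico π (2 * π) := by
    rw [zpow_add₀ (two_ne_zero (α := ℝ)), mul_assoc]
    exact phi_mem hks
  have h2 : (2:ℝ)^(phiE s) * s ∈ Set.Ico (-(2 * π)) (-π) ∪ Set.Ico π (2 * π) := phi_mem hs
  have he := dil_uniq hs h1 h2
  calc phi ((2:ℝ)^k * s) = (2:ℝ)^(phiE ((2:ℝ)^k * s) + k) * s := by
        rw [phi, zpow_add₀ (two_ne_zero (α := ℝ)), mul_assoc]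
    _ = (2:ℝ)^(phiE s) * s := by rw [he]
    _ = phi s := rfl
/-- A measurable set `G ⊆ ℝ` is a `2`-dilation generator of a partition of `ℝ`
(the dilates `2ⁿG` are a.e. disjoint and their union is conull) if and only if,
modulo a null set, `G` is dilation congruent modulo `2` to `[−2π,−π) ∪ [π,2π)`. -/
theorem stmt_12 (G : Set ℝ) (hG : MeasurableSet G) :
    ((∀ m n : ℤ, m ≠ n →
        AEDisjoint volume ((fun s => (2 : ℝ) ^ m * s) '' G) ((fun s => (2 : ℝ) ^ n * s) '' G)) ∧
      volume (⋃ n : ℤ, (fun s => (2 : ℝ) ^ n * s) '' G)ᶜ = 0) ↔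
    (∃ G' : Set ℝ, MeasurableSet G' ∧ volume (symmDiff G G') = 0 ∧
      DilationCongruent G' (Set.Ico (-(2 * π)) (-π) ∪ Set.Ico π (2 * π))) := by
  constructor
  · rintro ⟨hdisj, hcov⟩
    set N : Set ℝ := ⋃ k ∈ {k : ℤ | k ≠ 0}, G ∩ ((fun s => (2:ℝ)^k * s) '' G) with hNdef
    have hNmeas : MeasurableSet N :=
      MeasurableSet.biUnion (to_countable _) fun k _ => hG.inter (dil_meas k hG)
    have hG0img : (fun s => (2:ℝ)^(0:ℤ) * s) '' G = G := by
      simp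
    have hNnull : volume N = 0 := by
      rw [hNdef, measure_biUnion_null_iff (to_countable _)]
      intro k hk
      have hk' : k ≠ 0 := hk
      have := hdisj 0 k (Ne.symm hk')
      rw [hG0img] at this
      exact this
    set G0 : Set ℝ := G \ ({0} ∪ N) with hG0def
    have hG0meas : MeasurableSet G0 := hG.diff ((measurableSet_singleton 0).union hNmeas)
    set U0 : Set ℝ := ⋃ k : ℤ, (fun s => (2:ℝ)^k * s) '' G0 with hU0def
    set M : Set ℝ := (Set.Ico (-(2 * π)) (-π) ∪ Set.Ico π (2 * π)) \ U0 with hMdef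
    have hMmeas : MeasurableSet M :=
      (measurableSet_Ico.union measurableSet_Ico).diff
        (MeasurableSet.iUnion fun k => dil_meas k hG0meas)
    have h0N : volume ({(0:ℝ)} ∪ N) = 0 :=
      measure_union_null (measure_singleton 0) hNnull
    have hMnull : volume M = 0 := by
      apply measure_mono_null (t := (⋃ n : ℤ, (fun s => (2:ℝ)^n * s) '' G)ᶜ ∪
        ⋃ k : ℤ, (fun s => (2:ℝ)^k * s) '' ({0} ∪ N))
      · rintro x ⟨hxD, hxU⟩
        by_cases hx : x ∈ ⋃ n : ℤ, (fun s => (2:ℝ)^n * s) '' G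
        · right
          obtain ⟨k, g, hg, rfl⟩ := by simpa only [mem_iUnion, mem_image] using hx
          have hgn : g ∉ G0 := fun hg0 =>
            hxU (mem_iUnion.mpr ⟨k, ⟨g, hg0, rfl⟩⟩)
          have hgbad : g ∈ {(0:ℝ)} ∪ N := by
            by_contra hc
            exact hgn ⟨hg, hc⟩
          exact mem_iUnion.mpr ⟨k, ⟨g, hgbad, rfl⟩⟩
        · exact Or.inl hx
      · exact measure_union_null hcov (measure_iUnion_null fun k => dil_null k h0N)
    refine ⟨G0 ∪ M, hG0meas.union hMmeas, ?_, ?_⟩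
    · apply measure_mono_null (t := ({(0:ℝ)} ∪ N) ∪ M)
      · intro x hx
        rw [Set.mem_symmDiff] at hx
        rcases hx with ⟨hxG, hxn⟩ | ⟨hxG', hxnG⟩
        · left
          by_contra hc
          exact hxn (Or.inl ⟨hxG, hc⟩)
        · rcases hxG' with hx0 | hxM
          · exact absurd hx0.1 hxnG
          · exact Or.inr hxM
      · exact measure_union_null h0N hMnull
    · have hne : ∀ x ∈ G0 ∪ M, x ≠ 0 := by
        rintro x (hx | hx) rfl
        · exact hx.2 (Or.inl rfl)
        · exact zero_not_mem_D hx.1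
      refine ⟨phi, phi_meas, ⟨fun s hs => phi_mem (hne s hs), ?_, ?_⟩, fun s _ => phi_pow s⟩
      · -- InjOn
        intro s hs t ht hst
        have hst' : (2:ℝ)^(phiE s) * s = (2:ℝ)^(phiE t) * t := hst
        have hmemU : ∀ {a : ℝ}, a ∈ G0 → phi a ∈ U0 := fun {a} ha =>
          mem_iUnion.mpr ⟨phiE a, ⟨a, ha, rfl⟩⟩
        rcases hs with hs | hs <;> rcases ht with ht | ht
        · -- both in G0
          have h1 : s = (2:ℝ)^(phiE t - phiE s) * t := by
            calc s = (2:ℝ)^(-phiE s) * ((2:ℝ)^(phiE s) * s) := by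
                  rw [← mul_assoc, ← zpow_add₀ (two_ne_zero (α := ℝ)), neg_add_cancel,
                    zpow_zero, one_mul]
              _ = (2:ℝ)^(-phiE s) * ((2:ℝ)^(phiE t) * t) := by rw [hst']
              _ = (2:ℝ)^(phiE t - phiE s) * t := by
                  rw [← mul_assoc, ← zpow_add₀ (two_ne_zero (α := ℝ)), neg_add_eq_sub]
          by_cases hk : phiE t - phiE s = 0
          · have hee : phiE t = phiE s := by omega
            rw [hee] at hst'
            exact mul_left_cancel₀ (ne_of_gt (two_zpow_pos (phiE s))) hst'
          · exfalso
            apply hs.2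
            right
            exact mem_biUnion (show (phiE t - phiE s) ∈ {k : ℤ | k ≠ 0} from hk)
              ⟨hs.1, ⟨t, ht.1, h1.symm⟩⟩
        · -- s ∈ G0, t ∈ M
          exfalso
          have h2 := hmemU hs
          rw [hst, phi_fix ht.1] at h2
          exact ht.2 h2
        · -- s ∈ M, t ∈ G0
          exfalso
          have h2 := hmemU ht
          rw [← hst, phi_fix hs.1] at h2
          exact hs.2 h2
        · calc s = phi s := (phi_fix hs.1).symm
            _ = phi t := hst
            _ = t := phi_fix ht.1
      · -- SurjOn
        intro d hd
        by_cases hdU : d ∈ U0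
        · obtain ⟨k, hk⟩ := mem_iUnion.mp hdU
          obtain ⟨g, hg, hgd⟩ := hk
          have hgd' : (2:ℝ)^k * g = d := hgd
          have hg0 : g ≠ 0 := hne g (Or.inl hg)
          refine ⟨g, Or.inl hg, ?_⟩
          rw [← hgd', ← phi_dil hg0 k]
          exact phi_fix (hgd'.symm ▸ hd)
        · exact ⟨d, Or.inr ⟨hd, hdU⟩, phi_fix hd⟩
  · rintro ⟨G', hG'meas, hsd, τ, hτm, hbij, hpow⟩
    have h0 : (0:ℝ) ∉ G' := by
      intro h
      obtain ⟨n, hn⟩ := hpow 0 h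
      rw [mul_zero] at hn
      exact zero_not_mem_D (hn ▸ hbij.mapsTo h)
    have hne' : ∀ s ∈ G', s ≠ 0 := fun s hs h => h0 (h ▸ hs)
    have hzsm : StrictMono fun k : ℤ => (2:ℝ)^k := fun _ _ h =>
      (zpow_lt_zpow_iff_right₀ (one_lt_two (α := ℝ))).mpr h
    have key1 : ∀ m n : ℤ, m ≠ n →
        ((fun s => (2:ℝ)^m * s) '' G') ∩ ((fun s => (2:ℝ)^n * s) '' G') = ∅ := by
      intro m n hmn
      rw [eq_empty_iff_forall_notMem]
      rintro x ⟨⟨s, hs, rfl⟩, ⟨t, ht, hx⟩⟩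
      obtain ⟨a, ha⟩ := hpow s hs
      obtain ⟨b, hb⟩ := hpow t ht
      have hx' : (2:ℝ)^n * t = (2:ℝ)^m * s := hx
      have hs0 := hne' s hs
      have ht0 := hne' t ht
      have hτs : (2:ℝ)^a * s ∈ Set.Ico (-(2 * π)) (-π) ∪ Set.Ico π (2 * π) :=
        ha ▸ hbij.mapsTo hs
      have hτt : (2:ℝ)^b * t ∈ Set.Ico (-(2 * π)) (-π) ∪ Set.Ico π (2 * π) :=
        hb ▸ hbij.mapsTo ht
      have hts : t = (2:ℝ)^(m - n) * s := by
        calc t = (2:ℝ)^(-n) * ((2:ℝ)^n * t) := by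
              rw [← mul_assoc, ← zpow_add₀ (two_ne_zero (α := ℝ)), neg_add_cancel,
                zpow_zero, one_mul]
          _ = (2:ℝ)^(-n) * ((2:ℝ)^m * s) := by rw [hx']
          _ = (2:ℝ)^(m - n) * s := by
              rw [← mul_assoc, ← zpow_add₀ (two_ne_zero (α := ℝ)), neg_add_eq_sub]
      have hτt' : (2:ℝ)^(b + (m - n)) * s ∈ Set.Ico (-(2 * π)) (-π) ∪ Set.Ico π (2 * π) := by
        rw [zpow_add₀ (two_ne_zero (α := ℝ)), mul_assoc, ← hts]
        exact hτt
      have hab : a = b + (m - n) := dil_uniq hs0 hτs hτt'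
      have hττ : τ s = τ t := by
        rw [ha, hb, hts, hab, ← mul_assoc, ← zpow_add₀ (two_ne_zero (α := ℝ))]
      have hstq : s = t := hbij.injOn hs ht hττ
      rw [← hstq] at hx
      have h2 : (2:ℝ)^n = (2:ℝ)^m := mul_right_cancel₀ hs0 hx
      exact hmn (hzsm.injective h2).symm
    have key2 : ∀ x : ℝ, x ≠ 0 → x ∈ ⋃ n : ℤ, (fun s => (2:ℝ)^n * s) '' G' := by
      intro x hx
      obtain ⟨s, hs, hτs⟩ := hbij.surjOn (phi_mem hx)
      obtain ⟨a, ha⟩ := hpow s hs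
      have h1 : (2:ℝ)^(phiE x) * x = (2:ℝ)^a * s := by rw [← ha, hτs]; rfl
      have hxe : x = (2:ℝ)^(a - phiE x) * s := by
        calc x = (2:ℝ)^(-phiE x) * ((2:ℝ)^(phiE x) * x) := by
              rw [← mul_assoc, ← zpow_add₀ (two_ne_zero (α := ℝ)), neg_add_cancel,
                zpow_zero, one_mul]
          _ = (2:ℝ)^(-phiE x) * ((2:ℝ)^a * s) := by rw [h1]
          _ = (2:ℝ)^(a - phiE x) * s := by
              rw [← mul_assoc, ← zpow_add₀ (two_ne_zero (α := ℝ)), neg_add_eq_sub]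
      exact mem_iUnion.mpr ⟨a - phiE x, ⟨s, hs, hxe.symm⟩⟩
    rw [Set.symmDiff_def] at hsd
    have hGG' : volume (G \ G') = 0 :=
      measure_mono_null Set.subset_union_left hsd
    have hG'G : volume (G' \ G) = 0 :=
      measure_mono_null Set.subset_union_right hsd
    constructor
    · intro m n hmn
      apply measure_mono_null (t := ((fun s => (2:ℝ)^m * s) '' (G \ G')) ∪
        ((fun s => (2:ℝ)^n * s) '' (G \ G')) ∪
        (((fun s => (2:ℝ)^m * s) '' G') ∩ ((fun s => (2:ℝ)^n * s) '' G')))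
      · rintro x ⟨⟨s, hs, rfl⟩, ⟨t, ht, hx⟩⟩
        by_cases hsG' : s ∈ G'
        · by_cases htG' : t ∈ G'
          · exact Or.inr ⟨⟨s, hsG', rfl⟩, ⟨t, htG', hx⟩⟩
          · exact Or.inl (Or.inr ⟨t, ⟨ht, htG'⟩, hx⟩)
        · exact Or.inl (Or.inl ⟨s, ⟨hs, hsG'⟩, rfl⟩)
      · refine measure_union_null (measure_union_null (dil_null _ hGG') (dil_null _ hGG')) ?_
        rw [key1 m n hmn]
        exact measure_empty
    · apply measure_mono_null (t := {(0:ℝ)} ∪ ⋃ n : ℤ, (fun s => (2:ℝ)^n * s) '' (G' \ G))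
      · intro x hx
        by_cases hx0 : x = 0
        · exact Or.inl hx0
        · right
          obtain ⟨n, s, hs, hxe⟩ := by simpa only [mem_iUnion, mem_image] using key2 x hx0
          have hsG : s ∉ G := fun h => hx (mem_iUnion.mpr ⟨n, ⟨s, h, hxe⟩⟩)
          exact mem_iUnion.mpr ⟨n, ⟨s, ⟨hs, hsG⟩, hxe⟩⟩
      · exact measure_union_null (measure_singleton 0)
          (measure_iUnion_null fun n => dil_null n hG'G)
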